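/- Let β ∈ ℝ and define on Z/(p^s)Z the distribution P(E = j) = exp(−β·wt_L(j))/Z(β). Then the map β ↦ E[wt_L(E)] = Σ_j wt_L(j)·P(E = j) is strictly decreasing in β (for p^s > 2), and hence for every target T in the open interval (0, max average weight) there is a unique real β with E[wt_L(E)] = T. -/

import Mathlib

open Finset Filter Real

noncomputable def avgW (q : ℕ) (w : ℕ → ℕ) (β : ℝ) : ℝ :=
  (∑ j ∈ Finset.range q, (w j : ℝ) * Real.exp (-β * (w j : ℝ))) /
    (∑ j ∈ Finset.range q, Real.exp (-β * (w j : ℝ)))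

lemma denW_pos (q : ℕ) (w : ℕ → ℕ) (hq : 0 < q) (β : ℝ) :
    0 < ∑ j ∈ Finset.range q, Real.exp (-β * (w j : ℝ)) :=
  Finset.sum_pos (fun j _ => Real.exp_pos _) (by simp; omega)

lemma avgW_strictAnti (q : ℕ) (w : ℕ → ℕ) (hq : 2 ≤ q) (h0 : w 0 = 0) (h1 : w 1 = 1) :
    StrictAnti (avgW q w) := by
  intro β1 β2 hb
  have hd1 := denW_pos q w (by omega) β1
  have hd2 := denW_pos q w (by omega) β2
  rw [avgW, avgW, div_lt_div_iff₀ hd2 hd1]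
  rw [← sub_pos]
  set E1 : ℕ → ℝ := fun x => Real.exp (-β1 * (w x : ℝ)) with hE1
  set E2 : ℕ → ℝ := fun x => Real.exp (-β2 * (w x : ℝ)) with hE2
  set g : ℕ → ℕ → ℝ := fun i j => (w i : ℝ) * E1 i * E2 j - (w i : ℝ) * E2 i * E1 j with hg
  have expand : (∑ j ∈ Finset.range q, (w j : ℝ) * E1 j) * (∑ j ∈ Finset.range q, E2 j)
      - (∑ j ∈ Finset.range q, (w j : ℝ) * E2 j) * (∑ j ∈ Finset.range q, E1 j)
      = ∑ i ∈ Finset.range q, ∑ j ∈ Finset.range q, g i j := by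
    rw [Finset.sum_mul_sum, Finset.sum_mul_sum, ← Finset.sum_sub_distrib]
    exact Finset.sum_congr rfl fun i _ => by rw [← Finset.sum_sub_distrib]
  rw [expand]
  set t : ℕ → ℕ → ℝ := fun i j => ((w i : ℝ) - (w j : ℝ)) * (E1 i * E2 j - E2 i * E1 j) with ht
  have double : (∑ i ∈ Finset.range q, ∑ j ∈ Finset.range q, g i j) * 2
      = ∑ i ∈ Finset.range q, ∑ j ∈ Finset.range q, t i j := by
    have := Finset.sum_comm (s := Finset.range q) (t := Finset.range q) (f := fun i j => g i j)
    calc (∑ i ∈ Finset.range q, ∑ j ∈ Finset.range q, g i j) * 2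
        = (∑ i ∈ Finset.range q, ∑ j ∈ Finset.range q, g i j)
          + (∑ i ∈ Finset.range q, ∑ j ∈ Finset.range q, g j i) := by rw [← this]; ring
      _ = ∑ i ∈ Finset.range q, ∑ j ∈ Finset.range q, (g i j + g j i) := by
          rw [← Finset.sum_add_distrib]
          exact Finset.sum_congr rfl fun i _ => by rw [← Finset.sum_add_distrib]
      _ = ∑ i ∈ Finset.range q, ∑ j ∈ Finset.range q, t i j := by
          refine Finset.sum_congr rfl fun i _ => Finset.sum_congr rfl fun j _ => ?_
          simp only [hg, ht]; ring
  -- key sign facts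
  have hc : (0:ℝ) < β2 - β1 := by linarith
  have hfact : ∀ i j : ℕ, E1 i * E2 j - E2 i * E1 j
      = Real.exp (-β2 * (w i : ℝ) + -β2 * (w j : ℝ))
        * (Real.exp ((β2 - β1) * (w i : ℝ)) - Real.exp ((β2 - β1) * (w j : ℝ))) := by
    intro i j
    simp only [hE1, hE2, mul_sub, ← Real.exp_add]
    ring_nf
  have tnonneg : ∀ i j : ℕ, 0 ≤ t i j := by
    intro i j
    rw [ht]
    simp only
    rw [hfact i j, ← mul_assoc, mul_comm ((w i : ℝ) - (w j : ℝ)), mul_assoc]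
    refine mul_nonneg (Real.exp_pos _).le ?_
    rcases le_total (w i) (w j) with h | h
    · have h' : (w i : ℝ) ≤ (w j : ℝ) := by exact_mod_cast h
      have : Real.exp ((β2 - β1) * (w i : ℝ)) ≤ Real.exp ((β2 - β1) * (w j : ℝ)) :=
        Real.exp_le_exp.2 (by nlinarith)
      nlinarith
    · have h' : (w j : ℝ) ≤ (w i : ℝ) := by exact_mod_cast h
      refine mul_nonneg (by linarith) (by
        have : Real.exp ((β2 - β1) * (w j : ℝ)) ≤ Real.exp ((β2 - β1) * (w i : ℝ)) :=
          Real.exp_le_exp.2 (by nlinarith)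
        linarith)
  have tpos : 0 < t 0 1 := by
    rw [ht]
    simp only
    rw [hfact 0 1, h0, h1]
    push_cast
    simp only [mul_zero, Real.exp_zero, mul_one]
    have h1 : 1 < Real.exp (β2 - β1) := by
      rw [← Real.exp_zero]; exact Real.exp_lt_exp.2 hc
    nlinarith [mul_pos (Real.exp_pos (0 + -β2)) (sub_pos.2 h1)]
  have hpos : 0 < ∑ i ∈ Finset.range q, ∑ j ∈ Finset.range q, t i j := by
    refine Finset.sum_pos' (fun i _ => Finset.sum_nonneg fun j _ => tnonneg i j) ?_
    refine ⟨0, Finset.mem_range.2 (by omega), ?_⟩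
    refine Finset.sum_pos' (fun j _ => tnonneg 0 j) ⟨1, Finset.mem_range.2 (by omega), tpos⟩
  nlinarith [hpos, double]


lemma exp_term_tendsto_atTop (c : ℝ) (hc : 0 < c) :
    Tendsto (fun β : ℝ => Real.exp (-β * c)) atTop (nhds 0) := by
  refine Real.tendsto_exp_atBot.comp ?_
  exact Tendsto.atBot_mul_const hc tendsto_neg_atTop_atBot

lemma exp_term_tendsto_atBot (c : ℝ) (hc : 0 < c) :
    Tendsto (fun β : ℝ => Real.exp (β * c)) atBot (nhds 0) := by
  refine Real.tendsto_exp_atBot.comp ?_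
  exact Tendsto.atBot_mul_const hc tendsto_id

lemma avgW_tendsto_atTop (q : ℕ) (w : ℕ → ℕ) (hq : 0 < q) (h0 : w 0 = 0) :
    Tendsto (avgW q w) atTop (nhds 0) := by
  have hnum : Tendsto (fun β => ∑ j ∈ Finset.range q, (w j : ℝ) * Real.exp (-β * (w j : ℝ)))
      atTop (nhds 0) := by
    have : Tendsto (fun β => ∑ j ∈ Finset.range q, (w j : ℝ) * Real.exp (-β * (w j : ℝ)))
        atTop (nhds (∑ j ∈ Finset.range q, (0:ℝ))) := by
      refine tendsto_finset_sum _ fun j _ => ?_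
      rcases Nat.eq_zero_or_pos (w j) with h | h
      · simpa [h] using tendsto_const_nhds
      · have hc : (0:ℝ) < (w j : ℝ) := by exact_mod_cast h
        simpa using (exp_term_tendsto_atTop _ hc).const_mul ((w j : ℝ))
    simpa using this
  have hden : Tendsto (fun β => ∑ j ∈ Finset.range q, Real.exp (-β * (w j : ℝ)))
      atTop (nhds (∑ j ∈ Finset.range q, if w j = 0 then (1:ℝ) else 0)) := by
    refine tendsto_finset_sum _ fun j _ => ?_
    rcases Nat.eq_zero_or_pos (w j) with h | h
    · simpa [h] using tendsto_const_nhds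
    · have hc : (0:ℝ) < (w j : ℝ) := by exact_mod_cast h
      have hne : w j ≠ 0 := by omega
      simpa [hne] using exp_term_tendsto_atTop _ hc
  have hLpos : 0 < ∑ j ∈ Finset.range q, if w j = 0 then (1:ℝ) else 0 := by
    refine Finset.sum_pos' (fun j _ => by positivity) ⟨0, Finset.mem_range.2 hq, by simp [h0]⟩
  have h := hnum.div hden hLpos.ne'
  rw [zero_div] at h
  exact h

lemma avgW_tendsto_atBot (q : ℕ) (w : ℕ → ℕ) (M : ℕ)
    (hle : ∀ j < q, w j ≤ M) (hex : ∃ j < q, w j = M) :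
    Tendsto (avgW q w) atBot (nhds M) := by
  have hrw : ∀ β : ℝ, avgW q w β =
      (∑ j ∈ Finset.range q, (w j : ℝ) * Real.exp (β * ((M : ℝ) - (w j : ℝ)))) /
        (∑ j ∈ Finset.range q, Real.exp (β * ((M : ℝ) - (w j : ℝ)))) := by
    intro β
    rw [avgW]
    rw [← mul_div_mul_left _ _ (Real.exp_ne_zero (β * (M : ℝ))), Finset.mul_sum, Finset.mul_sum]
    congr 1
    · exact Finset.sum_congr rfl fun j _ => by rw [← mul_assoc, mul_comm (Real.exp _), mul_assoc, ← Real.exp_add]; ring_nf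
    · exact Finset.sum_congr rfl fun j _ => by rw [← Real.exp_add]; ring_nf
  rw [show avgW q w = fun β => (∑ j ∈ Finset.range q, (w j : ℝ) * Real.exp (β * ((M : ℝ) - (w j : ℝ)))) /
        (∑ j ∈ Finset.range q, Real.exp (β * ((M : ℝ) - (w j : ℝ)))) from funext hrw]
  set c : ℝ := ∑ j ∈ Finset.range q, if w j = M then (1:ℝ) else 0 with hcdef
  have hcpos : 0 < c := by
    obtain ⟨j, hj, hjM⟩ := hex
    refine Finset.sum_pos' (fun j _ => by positivity) ⟨j, Finset.mem_range.2 hj, by simp [hjM]⟩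
  have hnum : Tendsto (fun β => ∑ j ∈ Finset.range q, (w j : ℝ) * Real.exp (β * ((M:ℝ) - (w j : ℝ))))
      atBot (nhds (∑ j ∈ Finset.range q, if w j = M then (M:ℝ) else 0)) := by
    refine tendsto_finset_sum _ fun j hj => ?_
    rcases eq_or_lt_of_le (hle j (Finset.mem_range.1 hj)) with h | h
    · simp only [h, sub_self]
      norm_num
    · have hc : (0:ℝ) < (M:ℝ) - (w j : ℝ) := by
        have : (w j : ℝ) < (M : ℝ) := by exact_mod_cast h
        linarith
      have hne : ¬ (w j = M) := by omega
      simpa [hne] using (exp_term_tendsto_atBot _ hc).const_mul ((w j : ℝ))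
  have hden : Tendsto (fun β => ∑ j ∈ Finset.range q, Real.exp (β * ((M:ℝ) - (w j : ℝ))))
      atBot (nhds c) := by
    rw [hcdef]
    refine tendsto_finset_sum _ fun j hj => ?_
    rcases eq_or_lt_of_le (hle j (Finset.mem_range.1 hj)) with h | h
    · simp only [h, sub_self]
      norm_num
    · have hc : (0:ℝ) < (M:ℝ) - (w j : ℝ) := by
        have : (w j : ℝ) < (M : ℝ) := by exact_mod_cast h
        linarith
      have hne : ¬ (w j = M) := by omega
      simpa [hne] using exp_term_tendsto_atBot _ hc
  have hnumval : (∑ j ∈ Finset.range q, if w j = M then (M:ℝ) else 0) = (M:ℝ) * c := by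
    rw [hcdef, Finset.mul_sum]
    exact Finset.sum_congr rfl fun j _ => by split <;> simp
  have := hnum.div hden hcpos.ne'
  rw [hnumval] at this
  simpa [mul_div_assoc, div_self hcpos.ne', Pi.div_def] using this

lemma avgW_continuous (q : ℕ) (w : ℕ → ℕ) (hq : 0 < q) : Continuous (avgW q w) := by
  apply Continuous.div
  · exact continuous_finset_sum _ fun j _ => by fun_prop
  · exact continuous_finset_sum _ fun j _ => by fun_prop
  · intro β
    exact (Finset.sum_pos (fun j _ => Real.exp_pos _) (by simp; omega)).ne'

theorem stmt_19 (p s : ℕ) (hp : p.Prime) (hs : 0 < s) (hq : 2 < p ^ s) :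
    let q := p ^ s
    let w : ℕ → ℕ := fun j => min j (q - j)
    let avg : ℝ → ℝ := fun β =>
      (∑ j ∈ Finset.range q, (w j : ℝ) * Real.exp (-β * (w j : ℝ))) /
        (∑ j ∈ Finset.range q, Real.exp (-β * (w j : ℝ)))
    StrictAnti avg ∧
      ∀ T : ℝ, 0 < T → T < ((q / 2 : ℕ) : ℝ) → ∃! β : ℝ, avg β = T := by
  intro q w avg
  have hq' : 2 < q := hq
  have havg : avg = avgW q w := rfl
  have h0 : w 0 = 0 := by simp [w]
  have h1 : w 1 = 1 := by simp only [w]; omega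
  have hle : ∀ j < q, w j ≤ q / 2 := by intro j _; simp only [w]; omega
  have hex : ∃ j < q, w j = q / 2 := ⟨q / 2, by omega, by simp only [w]; omega⟩
  have hSA : StrictAnti avg := havg ▸ avgW_strictAnti q w (by omega) h0 h1
  refine ⟨hSA, ?_⟩
  intro T hT0 hTM
  have hcont := avgW_continuous q w (by omega)
  have htop := avgW_tendsto_atTop q w (by omega) h0
  have hbot := avgW_tendsto_atBot q w (q / 2) hle hex
  have hev1 : ∀ᶠ β in atTop, avgW q w β < T := htop.eventually (gt_mem_nhds hT0)
  have hev2 : ∀ᶠ β in atBot, T < avgW q w β := hbot.eventually (lt_mem_nhds hTM)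
  obtain ⟨b0, hb0⟩ := eventually_atTop.1 hev1
  obtain ⟨a0, ha0⟩ := eventually_atBot.1 hev2
  have hab : min a0 b0 ≤ max a0 b0 := min_le_max
  have hTa : T < avgW q w (min a0 b0) := ha0 _ (min_le_left _ _)
  have hTb : avgW q w (max a0 b0) < T := hb0 _ (le_max_right _ _)
  obtain ⟨β, _, hβ⟩ := intermediate_value_Icc' hab hcont.continuousOn ⟨hTb.le, hTa.le⟩
  refine ⟨β, by rw [havg]; exact hβ, ?_⟩
  intro y hy
  exact hSA.injective (by rw [hy, havg, hβ] : avg y = avg β)
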